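/- Let m ≥ 0 and let a_1, ..., a_n be invertible elements of a commutative ring. Then E_{2m}(a_1, -a_1, a_1^{-1}, -a_1^{-1}, ..., a_n, -a_n, a_n^{-1}, -a_n^{-1}) = (-1)^m · E_m(a_1^2, a_1^{-2}, ..., a_n^2, a_n^{-2}), where the left side is the 2m-th elementary symmetric polynomial in the 4n listed variables and the right side is the m-th elementary symmetric polynomial in the 2n listed variables. -/

import Mathlib

open Polynomial Multiset

lemma esymm_cons' {R : Type*} [CommRing R] (a : R) (s : Multiset R) (k : ℕ) :
    (a ::ₘ s).esymm (k + 1) = s.esymm (k + 1) + a * s.esymm k := by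
  simp only [Multiset.esymm, powersetCard_cons, Multiset.map_add, Multiset.sum_add,
    Multiset.map_map, Function.comp_def, Multiset.prod_cons]
  rw [← Multiset.sum_map_mul_left]

lemma quad_identity {R : Type*} [CommRing R] (x y : R) :
    (1 + C x * X) * ((1 + C (-x) * X) * ((1 + C y * X) * ((1 + C (-y) * X) * 1))) =
      (1 + C (-x ^ 2) * X ^ 2) * ((1 + C (-y ^ 2) * X ^ 2) * 1) := by
  simp only [map_neg, map_pow, mul_one]
  ring

lemma coeff_prod_one_add_CX {R : Type*} [CommRing R] (s : Multiset R) (k : ℕ) :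
    ((s.map fun r => 1 + C r * X).prod).coeff k = s.esymm k := by
  induction s using Multiset.induction_on generalizing k with
  | empty =>
    cases k with
    | zero => simp [Multiset.esymm]
    | succ k => simp [Multiset.esymm, Multiset.powersetCard_zero_right, coeff_one]
  | cons a s ih =>
    rw [Multiset.map_cons, Multiset.prod_cons]
    cases k with
    | zero =>
      simp only [coeff_mul, Finset.Nat.antidiagonal_zero, Finset.sum_singleton]
      simp [ih 0, Multiset.esymm]
    | succ k =>
      rw [add_mul, one_mul, coeff_add, mul_assoc, coeff_C_mul, coeff_X_mul, ih, ih,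
        esymm_cons']

/-- `E l d`: the `d`-th elementary symmetric polynomial of the list `l`,
with the convention `E l d = 0` for `d < 0` (and automatically `E l d = 0`
when `d` exceeds the length of `l`, and `E l 0 = 1`). -/
noncomputable def E {R : Type*} [CommRing R] (l : List R) (d : ℤ) : R :=
  if d < 0 then 0 else Multiset.esymm (l : Multiset R) d.toNat

theorem esymm_even_folding {R : Type*} [CommRing R] (n : ℕ) (a : Fin n → Rˣ) (m : ℕ) :
    E ((List.ofFn fun j => [((a j : R)), -(a j : R), ((a j)⁻¹ : Rˣ), -((a j)⁻¹ : Rˣ)]).flatten)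
        (2 * m)
      = (-1) ^ m *
        E ((List.ofFn fun j => [((a j : R)) ^ 2, ((a j)⁻¹ : Rˣ) ^ 2]).flatten) m := by
  rw [E, E, if_neg (by omega : ¬(2 * (m:ℤ) < 0)), if_neg (by omega : ¬((m:ℤ) < 0)),
    (by omega : (2 * (m:ℤ)).toNat = 2 * m), (by omega : ((m:ℤ)).toNat = m)]
  set t : Multiset R := ((List.ofFn fun j => [((a j : R)) ^ 2, ((a j)⁻¹ : Rˣ) ^ 2]).flatten : Multiset R)
  rw [← Multiset.esymm_neg, ← coeff_prod_one_add_CX, ← coeff_prod_one_add_CX]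
  have key : ((((List.ofFn fun j => [((a j : R)), -(a j : R), ((a j)⁻¹ : Rˣ), -((a j)⁻¹ : Rˣ)]).flatten : Multiset R)).map fun r => 1 + C r * X).prod
      = expand R 2 (((t.map Neg.neg).map fun r => 1 + C r * X).prod) := by
    rw [map_multiset_prod]
    simp only [t, Multiset.map_coe, Multiset.prod_coe, List.map_flatten, List.map_ofFn,
      List.prod_flatten, List.map_ofFn, List.prod_ofFn, Function.comp_def, List.map_cons,
      List.map_nil, List.prod_cons, List.prod_nil]
    refine Finset.prod_congr rfl fun j _ => ?_
    have hexp : ∀ c : R, (Polynomial.expand R 2) (1 + C c * X) = 1 + C c * X ^ 2 := fun c => by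
      simp
    rw [hexp, hexp]
    exact quad_identity _ _
  rw [key, mul_comm 2 m, Polynomial.coeff_expand_mul (by norm_num)]
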